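/- Let A be a commutative (not necessarily associative) C-algebra equipped with a symmetric bilinear form (·|·) satisfying the invariance property (a·b | c) = (b | a·c) for all a, b, c ∈ A. Let c_f be a nonzero complex number and suppose e, f, x ∈ A satisfy: e·e = 2e, f·f = 2f, e·f = 0, (e|e) = 1/4, (f|f) = c_f/2, e·x = (1/2)x, f·x = (3/2)x, (x|x) = 2c_f/3, and x·x lies in the linear span of e and f. Then x·x = (4c_f/3)·e + 2·f. (This is the Griess-algebra computation at the heart of Theorem 3.5, determining the product x·x in a 3-dimensional Griess algebra spanned by the conformal vector, an Ising vector and a common highest weight vector.) -/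

import Mathlib

theorem stmt_12 {A : Type*} [AddCommGroup A] [Module ℂ A]
    (mul : A → A → A) (form : A → A → ℂ)
    (hcomm : ∀ a b, mul a b = mul b a)
    (hmul_lin : ∀ a, IsLinearMap ℂ (mul a))
    (hform_symm : ∀ a b, form a b = form b a)
    (hform_lin : ∀ a, IsLinearMap ℂ (form a))
    (hinv : ∀ a b c, form (mul a b) c = form b (mul a c))
    (cf : ℂ) (hcf : cf ≠ 0)
    (e f x : A)
    (hee : mul e e = (2 : ℂ) • e)
    (hff : mul f f = (2 : ℂ) • f)
    (hef : mul e f = 0)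
    (hEe : form e e = 1 / 4)
    (hFf : form f f = cf / 2)
    (hex : mul e x = (1 / 2 : ℂ) • x)
    (hfx : mul f x = (3 / 2 : ℂ) • x)
    (hxx : form x x = 2 * cf / 3)
    (hspan : mul x x ∈ Submodule.span ℂ ({e, f} : Set A)) :
    mul x x = (4 * cf / 3) • e + (2 : ℂ) • f := by
  have smul_left : ∀ (c : ℂ) (a b : A), form (c • a) b = c * form a b := by
    intro c a b
    rw [hform_symm, (hform_lin b).map_smul, hform_symm]
    rfl
  -- (e|f) = 0
  have hef0 : form e f = 0 := by
    have h1 : form (mul e e) f = form e (mul e f) := hinv e e f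
    rw [hee, hef, smul_left, (hform_lin e).map_zero] at h1
    have : (2:ℂ) ≠ 0 := two_ne_zero
    exact (mul_eq_zero.mp h1).resolve_left this
  obtain ⟨a, b, hab⟩ := Submodule.mem_span_pair.mp hspan
  -- pair with e
  have he1 : form (mul x x) e = cf / 3 := by
    have := hinv x x e
    rw [hcomm x e, hex, (hform_lin x).map_smul] at this
    rw [this, hxx]
    simp only [smul_eq_mul]
    ring
  have he2 : form (a • e + b • f) e = a / 4 := by
    rw [hform_symm, (hform_lin e).map_add, (hform_lin e).map_smul,
      (hform_lin e).map_smul, hEe, hef0]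
    simp only [smul_eq_mul]
    ring
  have hf1 : form (mul x x) f = cf := by
    have := hinv x x f
    rw [hcomm x f, hfx, (hform_lin x).map_smul] at this
    rw [this, hxx]
    simp only [smul_eq_mul]
    ring
  have hf2 : form (a • e + b • f) f = b * cf / 2 := by
    rw [hform_symm, (hform_lin f).map_add, (hform_lin f).map_smul,
      (hform_lin f).map_smul, hform_symm f e, hef0, hFf]
    simp only [smul_eq_mul]
    ring
  have ha : a = 4 * cf / 3 := by
    have : a / 4 = cf / 3 := by rw [← he2, hab, he1]
    field_simp at this
    linear_combination this / 3
  have hb : b = 2 := by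
    have h : b * cf = 2 * cf := by
      have : b * cf / 2 = cf := by rw [← hf2, hab, hf1]
      field_simp at this
      linear_combination cf * this
    exact mul_right_cancel₀ hcf h
  rw [← hab, ha, hb]
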